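/- Let Γ be a countable group acting ergodically and measure-preservingly on a probability space (X,μ), and suppose H₀ ≤ Γ is a subgroup such that A₀ = {x : Γ_x = H₀} has positive measure. If T is a set of representatives for distinct left cosets of the normalizer N_Γ(H₀), then the sets {t·A₀ : t ∈ T} are pairwise disjoint and all have measure μ(A₀); in particular the normalizer N_Γ(H₀) has finite index in Γ. -/

import Mathlib

open MeasureTheory Pointwise


lemma map_conj_map_conj {Γ : Type*} [Group Γ] (a b : Γ) (K : Subgroup Γ) :
    Subgroup.map (MulAut.conj a).toMonoidHom (Subgroup.map (MulAut.conj b).toMonoidHom K) =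
      Subgroup.map (MulAut.conj (a * b)).toMonoidHom K := by
  rw [Subgroup.map_map]
  congr 1
  ext y
  simp [mul_assoc]

lemma mem_normalizer_of_map_conj {Γ : Type*} [Group Γ] {g : Γ} {K : Subgroup Γ}
    (h : Subgroup.map (MulAut.conj g).toMonoidHom K = K) : g ∈ Subgroup.normalizer (K : Set Γ) := by
  rw [Subgroup.mem_normalizer_iff]
  intro n
  constructor
  · intro hn
    rw [← h]
    exact ⟨n, hn, rfl⟩
  · intro hn
    rw [← h] at hn
    obtain ⟨m, hm, heq⟩ := hn
    simp only [MulEquiv.coe_toMonoidHom, MulAut.conj_apply] at heq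
    have : m = n := by
      have := mul_right_cancel heq
      exact mul_left_cancel this
    rwa [← this]

lemma mem_smul_setA {Γ X : Type*} [Group Γ] [MulAction Γ X] (H₀ : Subgroup Γ) (s : Γ) (x : X) :
    x ∈ s • {x : X | MulAction.stabilizer Γ x = H₀} ↔
      MulAction.stabilizer Γ x = Subgroup.map (MulAut.conj s).toMonoidHom H₀ := by
  rw [Set.mem_smul_set_iff_inv_smul_mem, Set.mem_setOf_eq,
    MulAction.stabilizer_smul_eq_stabilizer_map_conj]
  constructor
  · intro h
    rw [← h, map_conj_map_conj, mul_inv_cancel]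
    ext y
    simp
  · intro h
    rw [h, map_conj_map_conj, inv_mul_cancel]
    ext y
    simp

/-- A subgroup `N` of `Γ` acts ergodically on `(X, μ)`. -/
def ErgodicSubgroup {Γ X : Type*} [Group Γ] [MulAction Γ X] [MeasurableSpace X]
    (μ : Measure X) (N : Subgroup Γ) : Prop :=
  ∀ A : Set X, MeasurableSet A → (∀ γ ∈ N, (fun x => γ • x) ⁻¹' A = A) →
    μ A = 0 ∨ μ A = 1

/-- If the action of `Γ` is ergodic and `A₀ = {x | Γ_x = H₀}` has positive measure, then
translates of `A₀` by representatives of distinct left cosets of the normalizer of `H₀`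
are pairwise disjoint and of equal measure; in particular the normalizer has finite index. -/
theorem stmt_9 {Γ X : Type*} [Group Γ] [Countable Γ]
    [MeasurableSpace X] [MulAction Γ X]
    (μ : Measure X) [IsProbabilityMeasure μ]
    (hmp : ∀ γ : Γ, MeasurePreserving (fun x => γ • x) μ μ)
    (herg : ErgodicSubgroup μ (⊤ : Subgroup Γ))
    (H₀ : Subgroup Γ)
    (hmeasA : MeasurableSet {x : X | MulAction.stabilizer Γ x = H₀})
    (hpos : 0 < μ {x : X | MulAction.stabilizer Γ x = H₀})
    (T : Set Γ)
    (hT : ∀ s ∈ T, ∀ t ∈ T, s⁻¹ * t ∈ Subgroup.normalizer (H₀ : Set Γ) → s = t) :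
    (T.Pairwise fun s t =>
      Disjoint (s • {x : X | MulAction.stabilizer Γ x = H₀})
        (t • {x : X | MulAction.stabilizer Γ x = H₀})) ∧
    (∀ t ∈ T, μ (t • {x : X | MulAction.stabilizer Γ x = H₀}) =
      μ {x : X | MulAction.stabilizer Γ x = H₀}) ∧
    (Subgroup.normalizer (H₀ : Set Γ)).FiniteIndex := by
  set A := {x : X | MulAction.stabilizer Γ x = H₀} with hA
  have hdisj : ∀ s t : Γ, ¬ Disjoint (s • A) (t • A) → s⁻¹ * t ∈ Subgroup.normalizer (H₀ : Set Γ) := by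
    intro s t hnd
    rw [Set.not_disjoint_iff] at hnd
    obtain ⟨x, hxs, hxt⟩ := hnd
    rw [hA, mem_smul_setA] at hxs hxt
    have hmap := hxs.symm.trans hxt
    have h2 := congrArg (Subgroup.map (MulAut.conj s⁻¹).toMonoidHom) hmap
    rw [map_conj_map_conj, map_conj_map_conj, inv_mul_cancel] at h2
    have h1 : Subgroup.map (MulAut.conj (1 : Γ)).toMonoidHom H₀ = H₀ := by ext y; simp
    exact mem_normalizer_of_map_conj (h2.symm.trans h1)
  have hsmul_eq : ∀ g : Γ, g • A = (fun x => g⁻¹ • x) ⁻¹' A := by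
    intro g
    ext x
    simp [Set.mem_smul_set_iff_inv_smul_mem]
  have hmeas_smul : ∀ g : Γ, MeasurableSet (g • A) := by
    intro g
    rw [hsmul_eq]
    exact (hmp g⁻¹).measurable hmeasA
  have hmu_smul : ∀ g : Γ, μ (g • A) = μ A := by
    intro g
    rw [hsmul_eq, (hmp g⁻¹).measure_preimage hmeasA.nullMeasurableSet]
  refine ⟨?_, fun t _ => hmu_smul t, ?_⟩
  · intro s hs t ht hne
    by_contra hnd
    exact hne (hT s hs t ht (hdisj s t hnd))
  · constructor
    intro hidx
    have hinf : Infinite (Γ ⧸ Subgroup.normalizer (H₀ : Set Γ)) := by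
      rcases Nat.card_eq_zero.mp hidx with h | h
      · exact (h.false ((1 : Γ) : Γ ⧸ Subgroup.normalizer (H₀ : Set Γ))).elim
      · exact h
    let e := Infinite.natEmbedding (Γ ⧸ Subgroup.normalizer (H₀ : Set Γ))
    let g : ℕ → Γ := fun n => (e n).out
    have hgne : ∀ m n : ℕ, m ≠ n → (g m)⁻¹ * g n ∉ Subgroup.normalizer (H₀ : Set Γ) := by
      intro m n hmn hmem
      apply hmn
      apply e.injective
      have h3 : (QuotientGroup.mk (g m) : Γ ⧸ Subgroup.normalizer (H₀ : Set Γ)) = QuotientGroup.mk (g n) :=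
        (QuotientGroup.eq).mpr hmem
      calc e m = QuotientGroup.mk (g m) := (QuotientGroup.out_eq' (e m)).symm
        _ = QuotientGroup.mk (g n) := h3
        _ = e n := QuotientGroup.out_eq' (e n)
    have hpd : Pairwise (Function.onFun Disjoint fun n => g n • A) := by
      intro m n hmn
      by_contra hnd
      exact hgne m n hmn (hdisj _ _ hnd)
    have hU := measure_iUnion (μ := μ) hpd fun n => hmeas_smul (g n)
    have htop : (∑' n : ℕ, μ (g n • A)) = ⊤ := by
      rw [tsum_congr fun n => hmu_smul (g n)]
      exact ENNReal.tsum_const_eq_top_of_ne_zero hpos.ne'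
    have hle : μ (⋃ n, g n • A) ≤ 1 := prob_le_one
    rw [hU, htop] at hle
    simp at hle
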